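/- Invariance of log-density along an equivariant flow: suppose z : [t₀, t₁] → (ℝ^d)^n solves ż = f(z, t) with f permutation equivariant in z and differentiable in z, and define L(t) := L(t₀) − ∫_{t₀}^{t} Tr(∂f/∂z (z(τ), τ)) dτ. If z̃(t) := σ • z(t) is the solution with initial condition σ • z(t₀) and L̃ is defined analogously with the same initial value L̃(t₀) = L(t₀), then L̃(t) = L(t) for all t ∈ [t₀, t₁]; i.e., the instantaneous change-of-variables log-likelihood correction is permutation invariant along the trajectory. -/

import Mathlib

/-- Invariance of the instantaneous change-of-variables log-likelihood correction along an
equivariant flow: if `z` solves `ż = f(z,t)` with `f` Lipschitz, differentiable and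
permutation equivariant in the state, and `z̃` is the solution with initial condition
`σ • z(t₀)`, then the log-density corrections computed along `z̃` and `z` (from a common
initial value `L₀`) agree. -/
theorem log_density_correction_invariant {d n : ℕ}
    (f : (Fin n → (Fin d → ℝ)) → ℝ → (Fin n → (Fin d → ℝ)))
    (Klip : NNReal)
    (hlip : ∀ t : ℝ, LipschitzWith Klip (fun z => f z t))
    (hdiff : ∀ (t : ℝ), Differentiable ℝ (fun z => f z t))
    (hequiv : ∀ (σ : Equiv.Perm (Fin n)) (z : Fin n → (Fin d → ℝ)) (t : ℝ),
      f (fun i => z (σ⁻¹ i)) t = fun i => f z t (σ⁻¹ i))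
    (t₀ t₁ : ℝ) (σ : Equiv.Perm (Fin n)) (L₀ : ℝ)
    (z ztil : ℝ → (Fin n → (Fin d → ℝ)))
    (hz : ∀ t ∈ Set.Icc t₀ t₁, HasDerivAt z (f (z t) t) t)
    (hztil : ∀ t ∈ Set.Icc t₀ t₁, HasDerivAt ztil (f (ztil t) t) t)
    (hinit : ztil t₀ = fun i => z t₀ (σ⁻¹ i)) :
    ∀ t ∈ Set.Icc t₀ t₁,
      L₀ - ∫ τ in t₀..t,
          LinearMap.trace ℝ _ ((fderiv ℝ (fun w => f w τ) (ztil τ)).toLinearMap) =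
      L₀ - ∫ τ in t₀..t,
          LinearMap.trace ℝ _ ((fderiv ℝ (fun w => f w τ) (z τ)).toLinearMap) := by
  intro t ht
  -- The permutation as a continuous linear equivalence.
  set Pl : (Fin n → (Fin d → ℝ)) ≃ₗ[ℝ] (Fin n → (Fin d → ℝ)) :=
    LinearEquiv.funCongrLeft ℝ (Fin d → ℝ) (σ⁻¹ : Equiv.Perm (Fin n)) with hPl
  set P : (Fin n → (Fin d → ℝ)) ≃L[ℝ] (Fin n → (Fin d → ℝ)) :=
    Pl.toContinuousLinearEquiv with hP
  have hPapp : ∀ w : Fin n → (Fin d → ℝ), P w = fun i => w (σ⁻¹ i) := by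
    intro w; rfl
  -- the permuted trajectory
  have hg' : ∀ s ∈ Set.Icc t₀ t₁,
      HasDerivAt (fun s => P (z s)) (f (P (z s)) s) s := by
    intro s hs
    have h1 : HasDerivAt (fun s => P (z s)) (P (f (z s) s)) s := by
      have := (P.toContinuousLinearMap.hasFDerivAt.comp s (hz s hs).hasFDerivAt).hasDerivAt
      simp [Function.comp] at this
      exact this
    have h2 : P (f (z s) s) = f (P (z s)) s := by
      rw [hPapp (f (z s) s), hPapp (z s), hequiv σ (z s) s]
    rwa [h2] at h1
  -- uniqueness of solutions: ztil = P ∘ z on Icc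
  have huniq : Set.EqOn ztil (fun s => P (z s)) (Set.Icc t₀ t₁) := by
    apply ODE_solution_unique (v := fun s w => f w s) (K := Klip) hlip
    · exact fun s hs => ((hztil s hs).continuousAt).continuousWithinAt
    · exact fun s hs => ((hztil s (Set.mem_Icc_of_Ico hs)).hasDerivWithinAt)
    · exact fun s hs => ((hg' s hs).continuousAt).continuousWithinAt
    · exact fun s hs => ((hg' s (Set.mem_Icc_of_Ico hs)).hasDerivWithinAt)
    · rw [hinit, ← hPapp]
  -- trace is invariant under conjugation by P
  have htr : ∀ τ : ℝ, ∀ x : Fin n → (Fin d → ℝ),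
      LinearMap.trace ℝ _ ((fderiv ℝ (fun w => f w τ) (P x)).toLinearMap) =
      LinearMap.trace ℝ _ ((fderiv ℝ (fun w => f w τ) x).toLinearMap) := by
    intro τ x
    have hcomm : (fun w => f w τ) ∘ ⇑P = ⇑P ∘ (fun w => f w τ) := by
      funext w
      simp only [Function.comp_apply, hPapp]
      exact hequiv σ w τ
    have h1 : fderiv ℝ ((fun w => f w τ) ∘ ⇑P) x
        = (fderiv ℝ (fun w => f w τ) (P x)).comp (P : _ →L[ℝ] _) :=
      P.comp_right_fderiv
    have h2 : fderiv ℝ (⇑P ∘ (fun w => f w τ)) x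
        = (P : _ →L[ℝ] _).comp (fderiv ℝ (fun w => f w τ) x) :=
      P.comp_fderiv
    have h3 : (fderiv ℝ (fun w => f w τ) (P x)).comp (P : _ →L[ℝ] _)
        = (P : _ →L[ℝ] _).comp (fderiv ℝ (fun w => f w τ) x) := by
      rw [← h1, ← h2, hcomm]
    have h4 : (fderiv ℝ (fun w => f w τ) (P x)).toLinearMap
        = P.toLinearEquiv.conj (fderiv ℝ (fun w => f w τ) x).toLinearMap := by
      apply LinearMap.ext
      intro v
      have := congrArg (fun (L : _ →L[ℝ] _) => L (P.symm v)) h3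
      simp only [ContinuousLinearMap.comp_apply, ContinuousLinearEquiv.coe_coe,
        ContinuousLinearEquiv.apply_symm_apply] at this
      simpa [LinearEquiv.conj_apply] using this
    rw [h4, LinearMap.trace_conj']
  -- conclude
  congr 1
  apply intervalIntegral.integral_congr
  intro τ hτ
  have hτ' : τ ∈ Set.Icc t₀ t₁ := by
    rcases Set.mem_uIcc.mp hτ with h | h
    · exact ⟨h.1, le_trans h.2 ht.2⟩
    · exact ⟨le_trans ht.1 h.1, le_trans h.2 (le_trans ht.1 ht.2)⟩
  beta_reduce
  rw [show ztil τ = P (z τ) from huniq hτ']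
  exact htr τ (z τ)
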